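/- Compactness of independence logic for sets of formulas (lax semantics): Let τ be a first-order vocabulary and Γ a set of formulas of independence logic FO(dep, ⊥_c, ⊆, |) over τ (with possibly uncountably many free variables). If every finite subset Γ₀ ⊆ Γ is satisfiable (i.e. M ⊨_X Γ₀ for some τ-structure M and some nonempty team X of M), then Γ is satisfiable: there exist a τ-structure M and a nonempty team X of M such that M ⊨_X φ for every φ ∈ Γ. -/

import Mathlib

universe u v w

open FirstOrder FirstOrder.Language Filter

namespace TeamSemantics

/-- The supplemented team `X(F/x) = {s(a/x) : s ∈ X, a ∈ F(s)}`. -/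
def supFun {V M : Type*} [DecidableEq V] (X : Set (V → M)) (x : V) (F : (V → M) → Set M) :
    Set (V → M) :=
  {t | ∃ s ∈ X, ∃ a ∈ F s, t = Function.update s x a}

/-- The team `X(a/x) = {s(a/x) : s ∈ X}`. -/
def supElt {V M : Type*} [DecidableEq V] (X : Set (V → M)) (x : V) (a : M) : Set (V → M) :=
  {t | ∃ s ∈ X, t = Function.update s x a}

/-- The duplicated team `X(M/x) = {s(a/x) : s ∈ X, a ∈ M}`. -/
def dup {V M : Type*} [DecidableEq V] (X : Set (V → M)) (x : V) : Set (V → M) :=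
  {t | ∃ s ∈ X, ∃ a : M, t = Function.update s x a}

/-- Formulas of independence logic `FO(dep, ⊥_c, ⊆, |)` over the vocabulary `L`, with
variables from `V`, in negation normal form: first-order literals, dependence,
independence, inclusion and exclusion atoms, closed under `∧`, `∨`, `∃`, `∀`. -/
inductive TeamFormula (L : FirstOrder.Language.{u, u}) (V : Type v) : Type (max u v) where
  | equal : L.Term V → L.Term V → TeamFormula L V
  | nequal : L.Term V → L.Term V → TeamFormula L V
  | rel : ∀ {n : ℕ}, L.Relations n → (Fin n → L.Term V) → TeamFormula L V
  | nrel : ∀ {n : ℕ}, L.Relations n → (Fin n → L.Term V) → TeamFormula L V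
  | dep : ∀ {n : ℕ}, (Fin n → V) → V → TeamFormula L V
  | indep : ∀ {k m n : ℕ}, (Fin k → V) → (Fin m → V) → (Fin n → V) → TeamFormula L V
  | incl : ∀ {n : ℕ}, (Fin n → V) → (Fin n → V) → TeamFormula L V
  | excl : ∀ {n : ℕ}, (Fin n → V) → (Fin n → V) → TeamFormula L V
  | and : TeamFormula L V → TeamFormula L V → TeamFormula L V
  | or : TeamFormula L V → TeamFormula L V → TeamFormula L V
  | ex : V → TeamFormula L V → TeamFormula L V
  | all : V → TeamFormula L V → TeamFormula L V

/-- Lax team semantics `M ⊨_X φ` for independence logic. -/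
def Models {L : FirstOrder.Language.{u, u}} {V : Type v} [DecidableEq V]
    (M : Type w) [str : L.Structure M] :
    TeamFormula L V → Set (V → M) → Prop
  | .equal t₁ t₂, X => ∀ s ∈ X, t₁.realize s = t₂.realize s
  | .nequal t₁ t₂, X => ∀ s ∈ X, t₁.realize s ≠ t₂.realize s
  | .rel R ts, X => ∀ s ∈ X, Structure.RelMap R (fun k => (ts k).realize s)
  | .nrel R ts, X => ∀ s ∈ X, ¬ Structure.RelMap R (fun k => (ts k).realize s)
  | .dep xs y, X => ∀ s ∈ X, ∀ s' ∈ X, (∀ k, s (xs k) = s' (xs k)) → s y = s' y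
  | .indep xs zs ys, X => ∀ s ∈ X, ∀ s' ∈ X, (∀ k, s (zs k) = s' (zs k)) →
      ∃ s'' ∈ X, (∀ k, s'' (xs k) = s (xs k)) ∧ (∀ k, s'' (zs k) = s (zs k)) ∧
        (∀ k, s'' (ys k) = s' (ys k))
  | .incl xs ys, X => ∀ s ∈ X, ∃ s' ∈ X, ∀ k, s (xs k) = s' (ys k)
  | .excl xs ys, X => ∀ s ∈ X, ∀ s' ∈ X, (fun k => s (xs k)) ≠ (fun k => s' (ys k))
  | .and φ ψ, X => Models M φ X ∧ Models M ψ X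
  | .or φ ψ, X => ∃ Y Z, Y ∪ Z = X ∧ Models M φ Y ∧ Models M ψ Z
  | .ex x φ, X => ∃ F : (V → M) → Set M, (∀ s ∈ X, (F s).Nonempty) ∧ Models M φ (supFun X x F)
  | .all x φ, X => Models M φ (dup X x)

section Ultra
variable {I : Type u} (U : Ultrafilter I) (M : I → Type u) {L : FirstOrder.Language.{u,u}}
  [∀ i, L.Structure (M i)]

def pmk (f : ∀ i, M i) : (U : Filter I).Product M := (f : (U : Filter I).Product M)

theorem pmk_eq {f g : ∀ i, M i} : pmk U M f = pmk U M g ↔ ∀ᶠ i in (U : Filter I), f i = g i := by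
  letI := (U : Filter I).productSetoid M
  exact ⟨fun h => Quotient.exact' h, fun h => Quotient.sound' h⟩

theorem pmk_term {β : Type*} (t : L.Term β) (g : β → ∀ i, M i) :
    (t.realize fun v => pmk U M (g v)) = pmk U M (fun i => t.realize (fun v => g v i)) :=
  Ultraproduct.term_realize_cast g t

theorem pmk_rel {n : ℕ} (R : L.Relations n) (f : Fin n → ∀ i, M i) :
    Structure.RelMap (M := (U : Filter I).Product M) R (fun k => pmk U M (f k)) ↔
      ∀ᶠ i in (U : Filter I), Structure.RelMap R (fun k => f k i) :=
  @relMap_quotient_mk' L _ ((U : Filter I).productSetoid M) (Ultraproduct.setoidPrestructure M U) _ R f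

variable {V : Type v} [DecidableEq V]

/-- the ultraproduct of a family of teams -/
def UT (Y : ∀ i, Set (V → M i)) : Set (V → (U : Filter I).Product M) :=
  {s | ∃ g : ∀ i, V → M i, (∀ᶠ i in (U : Filter I), g i ∈ Y i) ∧
    ∀ v, s v = pmk U M (fun i => g i v)}

theorem models_UT (He : V → ∀ i, Nonempty (M i)) (φ : TeamFormula L V) :
    ∀ Y : ∀ i, Set (V → M i), (∀ᶠ i in (U : Filter I), Models (M i) φ (Y i)) →
      Models ((U : Filter I).Product M) φ (UT U M Y) := by
  induction φ with
  | equal t₁ t₂ =>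
    rintro Y hY s ⟨g, hg, hs⟩
    have hs' : s = fun v => pmk U M (fun i => g i v) := funext hs
    rw [hs', pmk_term, pmk_term, pmk_eq]
    filter_upwards [hY, hg] with i hm hgi
    exact hm (g i) hgi
  | nequal t₁ t₂ =>
    rintro Y hY s ⟨g, hg, hs⟩ hcon
    have hs' : s = fun v => pmk U M (fun i => g i v) := funext hs
    rw [hs', pmk_term, pmk_term, pmk_eq] at hcon
    obtain ⟨i, h1, h2, h3⟩ := (hcon.and (hY.and hg)).exists
    exact h2 (g i) h3 h1
  | rel R ts =>
    rintro Y hY s ⟨g, hg, hs⟩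
    have hs' : s = fun v => pmk U M (fun i => g i v) := funext hs
    have : ∀ k, (ts k).realize s = pmk U M (fun i => (ts k).realize (g i)) := by
      intro k; rw [hs', pmk_term]
    rw [show (fun k => (ts k).realize s) = fun k => pmk U M (fun i => (ts k).realize (g i))
      from funext this, pmk_rel]
    filter_upwards [hY, hg] with i hm hgi
    exact hm (g i) hgi
  | nrel R ts =>
    rintro Y hY s ⟨g, hg, hs⟩ hcon
    have hs' : s = fun v => pmk U M (fun i => g i v) := funext hs
    have : ∀ k, (ts k).realize s = pmk U M (fun i => (ts k).realize (g i)) := by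
      intro k; rw [hs', pmk_term]
    rw [show (fun k => (ts k).realize s) = fun k => pmk U M (fun i => (ts k).realize (g i))
      from funext this, pmk_rel] at hcon
    obtain ⟨i, h1, h2, h3⟩ := (hcon.and (hY.and hg)).exists
    exact h2 (g i) h3 h1
  | dep xs y =>
    rintro Y hY s ⟨g, hg, hs⟩ s' ⟨g', hg', hs'⟩ hagree
    have hk : ∀ᶠ i in (U : Filter I), ∀ k, g i (xs k) = g' i (xs k) :=
      eventually_all.2 fun k => (pmk_eq U M).1
        (((hs (xs k)).symm.trans ((hagree k).trans (hs' (xs k)))))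
    rw [hs y, hs' y, pmk_eq]
    filter_upwards [hY, hg, hg', hk] with i hm h1 h2 h3
    exact hm (g i) h1 (g' i) h2 h3
  | excl xs ys =>
    rintro Y hY s ⟨g, hg, hs⟩ s' ⟨g', hg', hs'⟩ hcon
    have hk : ∀ᶠ i in (U : Filter I), ∀ k, g i (xs k) = g' i (ys k) :=
      eventually_all.2 fun k => (pmk_eq U M).1
        (((hs (xs k)).symm.trans ((congrFun hcon k).trans (hs' (ys k)))))
    obtain ⟨i, hm, h1, h2, h3⟩ := (hY.and (hg.and (hg'.and hk))).exists
    exact hm (g i) h1 (g' i) h2 (funext h3)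
  | indep xs zs ys =>
    rintro Y hY s ⟨g, hg, hs⟩ s' ⟨g', hg', hs'⟩ hagree
    have hk : ∀ᶠ i in (U : Filter I), ∀ k, g i (zs k) = g' i (zs k) :=
      eventually_all.2 fun k => (pmk_eq U M).1
        ((hs (zs k)).symm.trans ((hagree k).trans (hs' (zs k))))
    classical
    set C : I → Prop := fun i =>
      Models (M i) (TeamFormula.indep (L := L) xs zs ys) (Y i) ∧ g i ∈ Y i ∧ g' i ∈ Y i ∧
        ∀ k, g i (zs k) = g' i (zs k) with hC
    have hCev : ∀ᶠ i in (U : Filter I), C i := by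
      filter_upwards [hY, hg, hg', hk] with i a b c d; exact ⟨a, b, c, d⟩
    set g'' : ∀ i, V → M i := fun i =>
      if h : C i then Classical.choose (h.1 (g i) h.2.1 (g' i) h.2.2.1 h.2.2.2) else g i
      with hg''def
    have hspec : ∀ i, C i → g'' i ∈ Y i ∧ (∀ k, g'' i (xs k) = g i (xs k)) ∧
        (∀ k, g'' i (zs k) = g i (zs k)) ∧ ∀ k, g'' i (ys k) = g' i (ys k) := by
      intro i h
      have := Classical.choose_spec (h.1 (g i) h.2.1 (g' i) h.2.2.1 h.2.2.2)
      simp only [hg''def, dif_pos h]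
      exact this
    refine ⟨fun v => pmk U M fun i => g'' i v, ⟨g'', ?_, fun v => rfl⟩, ?_, ?_, ?_⟩
    · filter_upwards [hCev] with i h; exact (hspec i h).1
    · intro k; rw [hs (xs k)]
      exact (pmk_eq U M).2 (by filter_upwards [hCev] with i h; exact (hspec i h).2.1 k)
    · intro k; rw [hs (zs k)]
      exact (pmk_eq U M).2 (by filter_upwards [hCev] with i h; exact (hspec i h).2.2.1 k)
    · intro k; rw [hs' (ys k)]
      exact (pmk_eq U M).2 (by filter_upwards [hCev] with i h; exact (hspec i h).2.2.2 k)
  | incl xs ys =>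
    rintro Y hY s ⟨g, hg, hs⟩
    classical
    set C : I → Prop := fun i => Models (M i) (TeamFormula.incl (L := L) xs ys) (Y i) ∧ g i ∈ Y i with hC
    have hCev : ∀ᶠ i in (U : Filter I), C i := by
      filter_upwards [hY, hg] with i a b; exact ⟨a, b⟩
    set g' : ∀ i, V → M i := fun i => if h : C i then Classical.choose (h.1 (g i) h.2) else g i
      with hg'def
    have hspec : ∀ i, C i → g' i ∈ Y i ∧ ∀ k, g i (xs k) = g' i (ys k) := by
      intro i h
      have := Classical.choose_spec (h.1 (g i) h.2)
      simp only [hg'def, dif_pos h]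
      exact this
    refine ⟨fun v => pmk U M fun i => g' i v, ⟨g', ?_, fun v => rfl⟩, ?_⟩
    · filter_upwards [hCev] with i h; exact (hspec i h).1
    · intro k; rw [hs (xs k)]
      exact (pmk_eq U M).2 (by filter_upwards [hCev] with i h; exact (hspec i h).2 k)
  | and φ ψ ih1 ih2 =>
    intro Y hY
    exact ⟨ih1 Y (hY.mono fun i h => h.1), ih2 Y (hY.mono fun i h => h.2)⟩
  | or φ ψ ih1 ih2 =>
    intro Y hY
    classical
    have key : ∀ i, ∃ Y1 Y2 : Set (V → M i), Models (M i) (TeamFormula.or φ ψ) (Y i) →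
        Y1 ∪ Y2 = Y i ∧ Models (M i) φ Y1 ∧ Models (M i) ψ Y2 := by
      intro i
      by_cases h : Models (M i) (TeamFormula.or φ ψ) (Y i)
      · obtain ⟨Y1, Y2, h1, h2, h3⟩ := h
        exact ⟨Y1, Y2, fun _ => ⟨h1, h2, h3⟩⟩
      · exact ⟨Y i, Y i, fun h' => absurd h' h⟩
    choose Y1 Y2 hY12 using key
    refine ⟨UT U M Y1, UT U M Y2, ?_, ih1 Y1 ?_, ih2 Y2 ?_⟩
    · apply Set.eq_of_subset_of_subset
      · rintro s (⟨g, hg, hs⟩ | ⟨g, hg, hs⟩)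
        · refine ⟨g, ?_, hs⟩
          filter_upwards [hY, hg] with i h1 h2
          rw [← (hY12 i h1).1]; exact Or.inl h2
        · refine ⟨g, ?_, hs⟩
          filter_upwards [hY, hg] with i h1 h2
          rw [← (hY12 i h1).1]; exact Or.inr h2
      · rintro s ⟨g, hg, hs⟩
        have hor : ∀ᶠ i in (U : Filter I), g i ∈ Y1 i ∨ g i ∈ Y2 i := by
          filter_upwards [hY, hg] with i h1 h2
          rw [← (hY12 i h1).1] at h2; exact h2
        rcases Ultrafilter.eventually_or.1 hor with h | h
        · exact Or.inl ⟨g, h, hs⟩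
        · exact Or.inr ⟨g, h, hs⟩
    · filter_upwards [hY] with i h; exact (hY12 i h).2.1
    · filter_upwards [hY] with i h; exact (hY12 i h).2.2
  | ex x φ ih =>
    intro Y hY
    classical
    haveI := He x
    have key : ∀ i, ∃ F : (V → M i) → Set (M i), Models (M i) (TeamFormula.ex x φ) (Y i) →
        (∀ s ∈ Y i, (F s).Nonempty) ∧ Models (M i) φ (supFun (Y i) x F) := by
      intro i
      by_cases h : Models (M i) (TeamFormula.ex x φ) (Y i)
      · obtain ⟨F, h1, h2⟩ := h
        exact ⟨F, fun _ => ⟨h1, h2⟩⟩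
      · exact ⟨fun _ => ∅, fun h' => absurd h' h⟩
    choose Fi hFi using key
    refine ⟨fun s => {a | ∃ (g : ∀ i, V → M i) (hh : ∀ i, M i),
        (∀ᶠ i in (U : Filter I), g i ∈ Y i ∧ hh i ∈ Fi i (g i)) ∧
        (∀ v, s v = pmk U M fun i => g i v) ∧ a = pmk U M hh}, ?_, ?_⟩
    · rintro s ⟨g, hg, hs⟩
      set C : I → Prop := fun i => Models (M i) (TeamFormula.ex x φ) (Y i) ∧ g i ∈ Y i with hC
      have hCev : ∀ᶠ i in (U : Filter I), C i := by
        filter_upwards [hY, hg] with i a b; exact ⟨a, b⟩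
      set hh : ∀ i, M i := fun i =>
        if hc : C i then Classical.choose ((hFi i hc.1).1 (g i) hc.2)
        else Classical.arbitrary (M i) with hhdef
      refine ⟨pmk U M hh, g, hh, ?_, hs, rfl⟩
      filter_upwards [hCev] with i hc
      refine ⟨hc.2, ?_⟩
      have := Classical.choose_spec ((hFi i hc.1).1 (g i) hc.2)
      simp only [hhdef, dif_pos hc]
      exact this
    · have hset : supFun (UT U M Y) x (fun s => {a | ∃ (g : ∀ i, V → M i) (hh : ∀ i, M i),
          (∀ᶠ i in (U : Filter I), g i ∈ Y i ∧ hh i ∈ Fi i (g i)) ∧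
          (∀ v, s v = pmk U M fun i => g i v) ∧ a = pmk U M hh}) =
          UT U M (fun i => supFun (Y i) x (Fi i)) := by
        apply Set.eq_of_subset_of_subset
        · rintro t ⟨s, hsY, a, ⟨g, hh, hgh, hsg, ha⟩, ht⟩
          refine ⟨fun i => Function.update (g i) x (hh i), ?_, ?_⟩
          · filter_upwards [hgh] with i hi
            exact ⟨g i, hi.1, hh i, hi.2, rfl⟩
          · intro v
            rcases eq_or_ne v x with rfl | hvx
            · rw [ht]
              simp only [Function.update_self]
              exact ha
            · rw [ht]
              simp only [Function.update_of_ne hvx]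
              rw [hsg v]
        · rintro t ⟨g'', hg'', ht⟩
          have key2 : ∀ i, ∃ p : (V → M i) × M i, g'' i ∈ supFun (Y i) x (Fi i) →
              p.1 ∈ Y i ∧ p.2 ∈ Fi i p.1 ∧ g'' i = Function.update p.1 x p.2 := by
            intro i
            by_cases h : g'' i ∈ supFun (Y i) x (Fi i)
            · obtain ⟨s, hs, a, ha, hupd⟩ := h
              exact ⟨(s, a), fun _ => ⟨hs, ha, hupd⟩⟩
            · exact ⟨(g'' i, Classical.arbitrary (M i)), fun h' => absurd h' h⟩
          choose p hp using key2
          refine ⟨fun v => pmk U M fun i => (p i).1 v, ⟨fun i => (p i).1, ?_, fun v => rfl⟩,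
            pmk U M (fun i => (p i).2),
            ⟨fun i => (p i).1, fun i => (p i).2, ?_, fun v => rfl, rfl⟩, ?_⟩
          · filter_upwards [hg''] with i hi; exact (hp i hi).1
          · filter_upwards [hg''] with i hi; exact ⟨(hp i hi).1, (hp i hi).2.1⟩
          · funext v
            rcases eq_or_ne v x with rfl | hvx
            · rw [ht v]
              simp only [Function.update_self]
              exact (pmk_eq U M).2 (by
                filter_upwards [hg''] with i hi
                rw [(hp i hi).2.2]; simp)
            · rw [ht v]
              simp only [Function.update_of_ne hvx]
              exact (pmk_eq U M).2 (by
                filter_upwards [hg''] with i hi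
                rw [(hp i hi).2.2]; simp [Function.update_of_ne hvx])
      rw [hset]
      apply ih
      filter_upwards [hY] with i h
      exact (hFi i h).2
  | all x φ ih =>
    intro Y hY
    classical
    haveI := He x
    have hset : dup (UT U M Y) x = UT U M (fun i => dup (Y i) x) := by
      apply Set.eq_of_subset_of_subset
      · rintro t ⟨s, ⟨g, hg, hs⟩, a, ht⟩
        obtain ⟨hh, rfl⟩ := Quotient.exists_rep a
        refine ⟨fun i => Function.update (g i) x (hh i), ?_, ?_⟩
        · filter_upwards [hg] with i hi; exact ⟨g i, hi, hh i, rfl⟩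
        · intro v
          rcases eq_or_ne v x with rfl | hvx
          · rw [ht]
            simp only [Function.update_self]
            exact Function.update_self _ _ _
          · rw [ht]
            simp only [Function.update_of_ne hvx]
            exact (Function.update_of_ne hvx _ _).trans (hs v)
      · rintro t ⟨g'', hg'', ht⟩
        have key2 : ∀ i, ∃ p : (V → M i) × M i, g'' i ∈ dup (Y i) x →
            p.1 ∈ Y i ∧ g'' i = Function.update p.1 x p.2 := by
          intro i
          by_cases h : g'' i ∈ dup (Y i) x
          · obtain ⟨s, hs, a, hupd⟩ := h
            exact ⟨(s, a), fun _ => ⟨hs, hupd⟩⟩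
          · exact ⟨(g'' i, Classical.arbitrary (M i)), fun h' => absurd h' h⟩
        choose p hp using key2
        refine ⟨fun v => pmk U M fun i => (p i).1 v, ⟨fun i => (p i).1, ?_, fun v => rfl⟩,
          pmk U M (fun i => (p i).2), ?_⟩
        · filter_upwards [hg''] with i hi; exact (hp i hi).1
        · funext v
          rcases eq_or_ne v x with rfl | hvx
          · rw [ht v]
            simp only [Function.update_self]
            exact (pmk_eq U M).2 (by
              filter_upwards [hg''] with i hi
              rw [(hp i hi).2]; simp)
          · rw [ht v]
            simp only [Function.update_of_ne hvx]
            exact (pmk_eq U M).2 (by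
              filter_upwards [hg''] with i hi
              rw [(hp i hi).2]; simp [Function.update_of_ne hvx])
    show Models ((U : Filter I).Product M) φ (dup (UT U M Y) x)
    rw [hset]
    apply ih
    filter_upwards [hY] with i h
    exact h
end Ultra

/-- Compactness of independence logic `FO(dep, ⊥_c, ⊆, |)` with lax team semantics, for
sets of formulas (with possibly uncountably many free variables): if every finite subset
of `Γ` is satisfied by some structure together with some nonempty team, then so is `Γ`. -/
theorem compactness_independence_logic_lax
    {L : FirstOrder.Language.{u, u}} {V : Type u} [DecidableEq V]
    (Γ : Set (TeamFormula L V))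
    (h : ∀ Γ₀ ⊆ Γ, Γ₀.Finite →
      ∃ (M : Type u) (str : L.Structure M) (X : Set (V → M)),
        X.Nonempty ∧ ∀ φ ∈ Γ₀, Models (str := str) M φ X) :
    ∃ (M : Type u) (str : L.Structure M) (X : Set (V → M)),
      X.Nonempty ∧ ∀ φ ∈ Γ, Models (str := str) M φ X := by
  classical
  let I : Type u := {i : Set (TeamFormula L V) // i ⊆ Γ ∧ i.Finite}
  haveI : Nonempty I := ⟨⟨∅, Set.empty_subset _, Set.finite_empty⟩⟩
  have hch : ∀ i : I, ∃ (M : Type u) (str : L.Structure M) (X : Set (V → M)),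
      X.Nonempty ∧ ∀ φ ∈ i.1, Models (str := str) M φ X := fun i => h i.1 i.2.1 i.2.2
  choose M str X hXne hX using hch
  letI : ∀ i : I, L.Structure (M i) := str
  let A : TeamFormula L V → Set I := fun φ => {i | φ ∈ i.1}
  have hgen : (Filter.generate (A '' Γ)).NeBot := by
    rw [Filter.generate_neBot_iff]
    intro t hts htf
    haveI : Finite t := htf
    have hex : ∀ u : t, ∃ φ ∈ Γ, A φ = u.1 := fun u => hts u.2
    choose f hf1 hf2 using hex
    have hfin : (Set.range f).Finite := Set.finite_range f
    have hsub : Set.range f ⊆ Γ := by rintro φ ⟨u, rfl⟩; exact hf1 u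
    refine ⟨⟨Set.range f, hsub, hfin⟩, ?_⟩
    intro u hu
    rw [show u = A (f ⟨u, hu⟩) from (hf2 ⟨u, hu⟩).symm]
    exact ⟨⟨u, hu⟩, rfl⟩
  let U : Ultrafilter I := Ultrafilter.of (Filter.generate (A '' Γ))
  have hU : ∀ φ ∈ Γ, A φ ∈ (U : Filter I) := fun φ hφ =>
    Ultrafilter.of_le _ (Filter.mem_generate_of_mem ⟨φ, hφ, rfl⟩)
  have He : V → ∀ i, Nonempty (M i) := fun v i => ⟨(hXne i).some v⟩
  refine ⟨(U : Filter I).Product M, inferInstance, UT U M X, ?_, ?_⟩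
  · exact ⟨fun v => pmk U M fun i => (hXne i).some v,
      ⟨fun i => (hXne i).some, Eventually.of_forall fun i => (hXne i).some_mem,
        fun v => rfl⟩⟩
  · intro φ hφ
    apply models_UT U M He φ X
    have hev : ∀ᶠ i in (U : Filter I), φ ∈ i.1 := hU φ hφ
    filter_upwards [hev] with i hi
    exact hX i φ hi


end TeamSemantics
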